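/- arXiv:1911.12023 — 3 statements merged into one kernel-verified Lean document; each statement's English description precedes it below -/
import Mathlib

section
/- Let F, Q, Φ, ω > 0 and let u be strictly increasing, strictly concave, differentiable with u(0)=0, u'(z) → 0 as z → ∞. Define θ₀ = F/u(Q) and θ₁ = Φ/(ω·u'(Q)). If ω < Φ·Q/F, then θ₀ < θ₁. -/
theorem theta0_lt_theta1
    (u : ℝ → ℝ) (F Q Φ ω : ℝ)
    (hF : 0 < F) (hQ : 0 < Q) (hΦ : 0 < Φ) (hω : 0 < ω)
    (hmono : StrictMonoOn u (Set.Ici (0:ℝ)))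
    (hconc : StrictConcaveOn ℝ (Set.Ici (0:ℝ)) u)
    (hdiff : ∀ z ∈ Set.Ici (0:ℝ), DifferentiableAt ℝ u z)
    (h0 : u 0 = 0)
    (hlim : Filter.Tendsto (deriv u) Filter.atTop (nhds 0))
    (hωsmall : ω < Φ * Q / F) :
    F / u Q < Φ / (ω * deriv u Q) := by
  have h0mem : (0:ℝ) ∈ Set.Ici (0:ℝ) := Set.self_mem_Ici
  have hQmem : Q ∈ Set.Ici (0:ℝ) := le_of_lt hQ
  have hQ1mem : Q + 1 ∈ Set.Ici (0:ℝ) := Set.mem_Ici.mpr (by linarith)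
  have huQ : 0 < u Q := by
    have := hmono h0mem hQmem hQ; linarith
  have hslope : deriv u Q < slope u 0 Q :=
    hconc.deriv_lt_slope h0mem hQmem hQ (hdiff Q hQmem)
  rw [slope_def_field, h0] at hslope
  have htan : Q * deriv u Q < u Q := by
    have := (lt_div_iff₀ hQ).mp (by simpa using hslope)
    linarith
  have hdpos : 0 < deriv u Q := by
    have h1 : slope u Q (Q + 1) < deriv u Q :=
      hconc.slope_lt_deriv hQmem hQ1mem (by linarith) (hdiff Q hQmem)
    rw [slope_def_field] at h1
    have h2 : u Q < u (Q + 1) := hmono hQmem hQ1mem (by linarith)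
    have h3 : Q + 1 - Q = 1 := by ring
    rw [h3, div_one] at h1
    linarith
  have hωF : ω * F < Φ * Q := by
    have := (lt_div_iff₀ hF).mp hωsmall
    linarith
  rw [div_lt_div_iff₀ huQ (by positivity)]
  nlinarith [mul_pos hΦ hdpos, mul_lt_mul_of_pos_left htan hΦ,
    mul_lt_mul_of_pos_right hωF hdpos]
end

section
/- Let u be strictly increasing, strictly concave, twice differentiable on [0,∞) with u(0)=0 and finite u'(0), and u'(z) → 0 as z → ∞. Let Φ, F, Q > 0 and define θ₃ = Φ/(ω·u'(0)), θ₁ = Φ/(ω·u'(Q)), and v(θ) = θ·u((u')⁻¹(Φ/(ωθ))) − (Φ/ω)·(u')⁻¹(Φ/(ωθ)) − θ·u(Q) + F. If Φ·u(Q)/(F·u'(0)) < ω < Φ·Q/F, then there exists a unique θ₄ ∈ (θ₃, θ₁) with v(θ₄) = 0. -/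
set_option maxHeartbeats 1000000


/-- `I` plays the role of the inverse function `(u')⁻¹` of the marginal utility. -/
theorem exists_unique_theta4
    (u I : ℝ → ℝ) (Φ ω F Q : ℝ)
    (hΦ : 0 < Φ) (hω : 0 < ω) (hF : 0 < F) (hQ : 0 < Q)
    (hmono : StrictMonoOn u (Set.Ici (0:ℝ)))
    (hconc : StrictConcaveOn ℝ (Set.Ici (0:ℝ)) u)
    (hdiff : ∀ z ∈ Set.Ici (0:ℝ), DifferentiableAt ℝ u z)
    (hdiff2 : ∀ z ∈ Set.Ici (0:ℝ), DifferentiableAt ℝ (deriv u) z)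
    (h0 : u 0 = 0)
    (hderiv0 : 0 < deriv u 0)
    (hlim : Filter.Tendsto (deriv u) Filter.atTop (nhds 0))
    (hI : ∀ s ∈ Set.Ioo (0:ℝ) (deriv u 0), deriv u (I s) = s ∧ 0 ≤ I s)
    (hωlow : Φ * u Q / (F * deriv u 0) < ω) (hωhigh : ω < Φ * Q / F) :
    ∃! θ₄ : ℝ, θ₄ ∈ Set.Ioo (Φ / (ω * deriv u 0)) (Φ / (ω * deriv u Q)) ∧
      θ₄ * u (I (Φ / (ω * θ₄))) - (Φ / ω) * I (Φ / (ω * θ₄)) - θ₄ * u Q + F = 0 := by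
  have hanti : StrictAntiOn (deriv u) (Set.Ici (0:ℝ)) :=
    hconc.strictAntiOn_deriv hdiff
  have hccv : ConcaveOn ℝ (Set.Ici (0:ℝ)) u := hconc.concaveOn
  -- the derivative is positive on `Ici 0`
  have dpos : ∀ z ∈ Set.Ici (0:ℝ), 0 < deriv u z := by
    intro z hz
    have hz1 : z + 1 ∈ Set.Ici (0:ℝ) := by
      simp only [Set.mem_Ici] at hz ⊢; linarith
    have hslope : slope u z (z + 1) ≤ deriv u z :=
      hccv.slope_le_deriv hz hz1 (by linarith) (hdiff z hz)
    have huz : u z < u (z + 1) := hmono hz hz1 (by linarith)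
    rw [slope_def_field] at hslope
    have : (0:ℝ) < (u (z+1) - u z) / (z + 1 - z) := by
      apply div_pos (by linarith); linarith
    linarith
  have hQ0 : (Q:ℝ) ∈ Set.Ici (0:ℝ) := le_of_lt hQ
  have h00 : (0:ℝ) ∈ Set.Ici (0:ℝ) := Set.mem_Ici.mpr le_rfl
  have dQpos : 0 < deriv u Q := dpos Q hQ0
  have dQlt : deriv u Q < deriv u 0 := hanti h00 hQ0 hQ
  have uQpos : 0 < u Q := by
    have := hmono h00 hQ0 hQ; rw [h0] at this; exact this
  -- the auxiliary function w
  set w : ℝ → ℝ := fun z => Φ / (ω * deriv u z) * (u z - u Q) - Φ / ω * z + F with hw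
  have hwcont : ContinuousOn w (Set.Icc 0 Q) := by
    intro z hz
    have hz' : z ∈ Set.Ici (0:ℝ) := hz.1
    have h1 : ContinuousAt (deriv u) z := (hdiff2 z hz').continuousAt
    have h2 : ContinuousAt u z := (hdiff z hz').continuousAt
    have hne : ω * deriv u z ≠ 0 := ne_of_gt (mul_pos hω (dpos z hz'))
    exact (((((continuousAt_const.div (continuousAt_const.mul h1) hne).mul
      (h2.sub continuousAt_const)).sub
      ((continuousAt_const (y := Φ / ω)).mul continuousAt_id)).add
      continuousAt_const)).continuousWithinAt
  have hw0 : 0 < w 0 := by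
    have hFd : 0 < F * deriv u 0 := mul_pos hF hderiv0
    rw [div_lt_iff₀ hFd] at hωlow
    have hωd : 0 < ω * deriv u 0 := mul_pos hω hderiv0
    have : Φ / (ω * deriv u 0) * u Q < F := by
      rw [div_mul_eq_mul_div, div_lt_iff₀ hωd]; nlinarith
    simp only [hw, h0, zero_sub, mul_neg, mul_zero, sub_zero]
    linarith
  have hwQ : w Q < 0 := by
    have : F < Φ / ω * Q := by
      rw [lt_div_iff₀ hF] at hωhigh
      rw [div_mul_eq_mul_div, lt_div_iff₀ hω]; nlinarith
    simp only [hw, sub_self, mul_zero, zero_sub]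
    linarith
  obtain ⟨z₀, hz₀, hwz₀⟩ : ∃ z₀ ∈ Set.Ioo (0:ℝ) Q, w z₀ = 0 := by
    have := intermediate_value_Ioo' (le_of_lt hQ) hwcont (Set.mem_Ioo.mpr ⟨hwQ, hw0⟩)
    obtain ⟨z₀, hmem, heq⟩ := this
    exact ⟨z₀, hmem, heq⟩
  have hz₀' : z₀ ∈ Set.Ici (0:ℝ) := le_of_lt hz₀.1
  set d := deriv u z₀ with hd
  have hdpos : 0 < d := dpos z₀ hz₀'
  have hdlt : d < deriv u 0 := hanti h00 hz₀' hz₀.1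
  have hdgt : deriv u Q < d := hanti hz₀' hQ0 hz₀.2
  set θ₄ := Φ / (ω * d) with hθ₄
  -- membership
  have hmem : θ₄ ∈ Set.Ioo (Φ / (ω * deriv u 0)) (Φ / (ω * deriv u Q)) := by
    constructor
    · exact div_lt_div_of_pos_left hΦ (mul_pos hω hdpos)
        ((mul_lt_mul_iff_right₀ hω).mpr hdlt)
    · exact div_lt_div_of_pos_left hΦ (mul_pos hω dQpos)
        ((mul_lt_mul_iff_right₀ hω).mpr hdgt)
  have hθ₄pos : 0 < θ₄ := div_pos hΦ (mul_pos hω hdpos)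
  have hkey : Φ / (ω * θ₄) = d := by
    rw [hθ₄]
    field_simp
  -- I of d is z₀
  have hIz : I (Φ / (ω * θ₄)) = z₀ := by
    rw [hkey]
    obtain ⟨h1, h2⟩ := hI d ⟨hdpos, hdlt⟩
    exact hanti.injOn h2 hz₀' (by rw [h1])
  -- generic root comparison: strict antitonicity of v on the interval
  have hθ₃pos : 0 < Φ / (ω * deriv u 0) := div_pos hΦ (mul_pos hω hderiv0)
  have zprop : ∀ θ ∈ Set.Ioo (Φ / (ω * deriv u 0)) (Φ / (ω * deriv u Q)),
      deriv u (I (Φ / (ω * θ))) = Φ / (ω * θ) ∧ 0 ≤ I (Φ / (ω * θ)) ∧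
      I (Φ / (ω * θ)) < Q := by
    intro θ hθ
    have hθpos : 0 < θ := lt_trans hθ₃pos hθ.1
    have hs1 : Φ / (ω * θ) < deriv u 0 := by
      have := div_lt_div_of_pos_left hΦ (mul_pos hω hθ₃pos)
        ((mul_lt_mul_iff_right₀ hω).mpr hθ.1)
      calc Φ / (ω * θ) < Φ / (ω * (Φ / (ω * deriv u 0))) := this
        _ = deriv u 0 := by field_simp
    have hs2 : deriv u Q < Φ / (ω * θ) := by
      have := div_lt_div_of_pos_left hΦ (mul_pos hω hθpos)
        ((mul_lt_mul_iff_right₀ hω).mpr hθ.2)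
      calc deriv u Q = Φ / (ω * (Φ / (ω * deriv u Q))) := by field_simp
        _ < Φ / (ω * θ) := this
    have hspos : 0 < Φ / (ω * θ) := lt_trans dQpos hs2
    obtain ⟨h1, h2⟩ := hI (Φ / (ω * θ)) ⟨hspos, hs1⟩
    refine ⟨h1, h2, ?_⟩
    by_contra hcon
    push_neg at hcon
    rcases eq_or_lt_of_le hcon with heq | hlt
    · rw [← heq] at h1; rw [h1] at hs2; exact lt_irrefl _ hs2
    · have := hanti hQ0 h2 hlt
      rw [h1] at this
      exact absurd (lt_trans hs2 this) (lt_irrefl _)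
  -- tangent-line inequality
  have tangent : ∀ θ ∈ Set.Ioo (Φ / (ω * deriv u 0)) (Φ / (ω * deriv u Q)),
      ∀ y ∈ Set.Ici (0:ℝ),
      θ * u y - Φ / ω * y ≤ θ * u (I (Φ / (ω * θ))) - Φ / ω * I (Φ / (ω * θ)) := by
    intro θ hθ y hy
    have hθpos : 0 < θ := lt_trans hθ₃pos hθ.1
    obtain ⟨h1, h2, _⟩ := zprop θ hθ
    set z := I (Φ / (ω * θ)) with hzdef
    have hts : θ * (Φ / (ω * θ)) = Φ / ω := by field_simp
    rcases lt_trichotomy y z with hlt | heq | hgt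
    · have hsl : deriv u z ≤ slope u y z := hccv.deriv_le_slope hy h2 hlt (hdiff z h2)
      rw [slope_def_field, h1, le_div_iff₀ (by linarith)] at hsl
      nlinarith
    · rw [heq]
    · have hsl : slope u z y ≤ deriv u z := hccv.slope_le_deriv h2 hy hgt (hdiff z h2)
      rw [slope_def_field, h1, div_le_iff₀ (by linarith)] at hsl
      nlinarith
  -- strict antitonicity of v
  have hanti_v : ∀ a ∈ Set.Ioo (Φ / (ω * deriv u 0)) (Φ / (ω * deriv u Q)),
      ∀ b ∈ Set.Ioo (Φ / (ω * deriv u 0)) (Φ / (ω * deriv u Q)), a < b →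
      b * u (I (Φ / (ω * b))) - Φ / ω * I (Φ / (ω * b)) - b * u Q + F <
      a * u (I (Φ / (ω * a))) - Φ / ω * I (Φ / (ω * a)) - a * u Q + F := by
    intro a ha b hb hab
    obtain ⟨hb1, hb2, hb3⟩ := zprop b hb
    have hub : u (I (Φ / (ω * b))) < u Q := hmono hb2 hQ0 hb3
    have htan := tangent a ha (I (Φ / (ω * b))) hb2
    have hprod : 0 < (b - a) * (u Q - u (I (Φ / (ω * b)))) :=
      mul_pos (sub_pos.2 hab) (sub_pos.2 hub)
    have key2 : b * u (I (Φ / (ω * b))) - b * u Q <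
        a * u (I (Φ / (ω * b))) - a * u Q := by nlinarith [hprod]
    linarith [htan, key2]
  -- finish
  refine ⟨θ₄, ⟨hmem, ?_⟩, ?_⟩
  · rw [hIz]
    have : w z₀ = 0 := hwz₀
    simp only [hw] at this
    have hexp : θ₄ * (u z₀ - u Q) = Φ / (ω * d) * (u z₀ - u Q) := by rw [hθ₄]
    nlinarith [hexp, this]
  · rintro θ' ⟨hmem', heq'⟩
    rcases lt_trichotomy θ' θ₄ with h | h | h
    · have := hanti_v θ' hmem' θ₄ hmem h
      rw [heq'] at this
      have h04 : θ₄ * u (I (Φ / (ω * θ₄))) - Φ / ω * I (Φ / (ω * θ₄)) - θ₄ * u Q + F = 0 := by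
        rw [hIz]
        have : w z₀ = 0 := hwz₀
        simp only [hw] at this
        have hexp : θ₄ * (u z₀ - u Q) = Φ / (ω * d) * (u z₀ - u Q) := by rw [hθ₄]
        nlinarith [hexp, this]
      rw [h04] at this
      exact absurd this (lt_irrefl 0)
    · exact h
    · have := hanti_v θ₄ hmem θ' hmem' h
      rw [heq'] at this
      have h04 : θ₄ * u (I (Φ / (ω * θ₄))) - Φ / ω * I (Φ / (ω * θ₄)) - θ₄ * u Q + F = 0 := by
        rw [hIz]
        have : w z₀ = 0 := hwz₀
        simp only [hw] at this
        have hexp : θ₄ * (u z₀ - u Q) = Φ / (ω * d) * (u z₀ - u Q) := by rw [hθ₄]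
        nlinarith [hexp, this]
      rw [h04] at this
      exact absurd this (lt_irrefl 0)
end

section
/- With the setting of the previous statement (Φ·u(Q)/(F·u'(0)) < ω < Φ·Q/F), the threshold θ₄ satisfies θ₄ > θ₀ where θ₀ = F/u(Q), and dθ₄/dω = (Φ/ω²)·(u')⁻¹(Φ/(ωθ₄)) / (u(Q) − u((u')⁻¹(Φ/(ωθ₄)))) > 0, so θ₄ is strictly increasing in ω. -/
/-- `I` plays the role of the inverse function `(u')⁻¹` of the marginal utility,
and `Θ` is the implicitly defined threshold `θ₄` as a function of the unit data
reward `ω`. -/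
theorem theta4_properties
    (u I Θ : ℝ → ℝ) (Φ F Q : ℝ)
    (hΦ : 0 < Φ) (hF : 0 < F) (hQ : 0 < Q)
    (hmono : StrictMonoOn u (Set.Ici (0:ℝ)))
    (hconc : StrictConcaveOn ℝ (Set.Ici (0:ℝ)) u)
    (hdiff : ∀ z ∈ Set.Ici (0:ℝ), DifferentiableAt ℝ u z)
    (hdiff2 : ∀ z ∈ Set.Ici (0:ℝ), DifferentiableAt ℝ (deriv u) z)
    (h0 : u 0 = 0)
    (hderiv0 : 0 < deriv u 0)
    (hlim : Filter.Tendsto (deriv u) Filter.atTop (nhds 0))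
    (hI : ∀ s ∈ Set.Ioo (0:ℝ) (deriv u 0), deriv u (I s) = s ∧ 0 ≤ I s)
    (hIdiff : ∀ s ∈ Set.Ioo (0:ℝ) (deriv u 0), DifferentiableAt ℝ I s)
    (hΘdiff : ∀ ω ∈ Set.Ioo (Φ * u Q / (F * deriv u 0)) (Φ * Q / F),
      DifferentiableAt ℝ Θ ω)
    (hΘmem : ∀ ω ∈ Set.Ioo (Φ * u Q / (F * deriv u 0)) (Φ * Q / F),
      Θ ω ∈ Set.Ioo (Φ / (ω * deriv u 0)) (Φ / (ω * deriv u Q)))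
    (hΘroot : ∀ ω ∈ Set.Ioo (Φ * u Q / (F * deriv u 0)) (Φ * Q / F),
      Θ ω * u (I (Φ / (ω * Θ ω))) - (Φ / ω) * I (Φ / (ω * Θ ω)) - Θ ω * u Q + F = 0) :
    ∀ ω ∈ Set.Ioo (Φ * u Q / (F * deriv u 0)) (Φ * Q / F),
      Θ ω > F / u Q ∧
      deriv Θ ω = (Φ / ω ^ 2) * I (Φ / (ω * Θ ω)) / (u Q - u (I (Φ / (ω * Θ ω)))) ∧
      0 < deriv Θ ω := by
  intro ω hω
  obtain ⟨hω1, hω2⟩ := hω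
  -- basic positivity
  have hQmem : Q ∈ Set.Ici (0:ℝ) := le_of_lt hQ
  have h0mem : (0:ℝ) ∈ Set.Ici (0:ℝ) := Set.mem_Ici.mpr le_rfl
  have huQ : 0 < u Q := by
    have := hmono h0mem hQmem hQ; rwa [h0] at this
  have ha : 0 < Φ * u Q / (F * deriv u 0) := by positivity
  have hω0 : 0 < ω := lt_trans ha hω1
  -- deriv u is strictly antitone on [0, ∞)
  have hanti : StrictAntiOn (deriv u) (Set.Ici (0:ℝ)) :=
    hconc.strictAntiOn_deriv hdiff
  -- deriv u Q > 0
  have hQ1mem : Q + 1 ∈ Set.Ici (0:ℝ) := by simp [Set.mem_Ici]; linarith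
  have hduQ1 : 0 ≤ deriv u (Q + 1) := by
    refine le_of_tendsto hlim ?_
    filter_upwards [Filter.eventually_ge_atTop (Q + 1)] with w hw
    rcases eq_or_lt_of_le hw with h | h
    · rw [← h]
    · exact le_of_lt (hanti hQ1mem (le_trans (le_of_lt (by linarith : (0:ℝ) < Q + 1)) hw) h)
  have hduQ : 0 < deriv u Q := lt_of_le_of_lt hduQ1 (hanti hQmem hQ1mem (by linarith))
  -- the threshold and its location
  obtain ⟨hΘl, hΘr⟩ := hΘmem ω ⟨hω1, hω2⟩
  have hθpos : 0 < Θ ω := lt_trans (by positivity) hΘl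
  set s : ℝ := Φ / (ω * Θ ω) with hs_def
  have hspos : 0 < s := by positivity
  have hslt : s < deriv u 0 := by
    rw [hs_def, div_lt_iff₀ (by positivity)]
    rw [div_lt_iff₀ (by positivity)] at hΘl
    nlinarith
  have hsgt : deriv u Q < s := by
    rw [hs_def, lt_div_iff₀ (by positivity)]
    rw [lt_div_iff₀ (by positivity)] at hΘr
    nlinarith
  obtain ⟨hIs_deriv, hIs_nonneg⟩ := hI s ⟨hspos, hslt⟩
  have hIsmem : I s ∈ Set.Ici (0:ℝ) := hIs_nonneg
  -- 0 < I s
  have hIspos : 0 < I s := by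
    rcases eq_or_lt_of_le hIs_nonneg with h | h
    · exfalso; rw [← h] at hIs_deriv; rw [← hIs_deriv] at hslt; exact lt_irrefl _ hslt
    · exact h
  -- I s < Q
  have hIsltQ : I s < Q := by
    by_contra h
    push_neg at h
    rcases eq_or_lt_of_le h with h' | h'
    · rw [h', hIs_deriv] at hsgt; exact lt_irrefl _ hsgt
    · have := hanti hQmem hIsmem h'
      rw [hIs_deriv] at this; linarith
  have huIs_lt : u (I s) < u Q := hmono hIsmem hQmem hIsltQ
  -- tangent line inequality: s * I s < u (I s)
  have htang : s * I s < u (I s) := by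
    have h1 : deriv u (I s) < slope u 0 (I s) :=
      hconc.deriv_lt_slope h0mem hIsmem hIspos (hdiff _ hIsmem)
    rw [hIs_deriv, slope_def_field] at h1
    rw [h0, sub_zero, sub_zero, div_eq_mul_inv] at h1
    rw [← mul_lt_mul_iff_of_pos_right (inv_pos.mpr hIspos)]
    calc s * I s * (I s)⁻¹ = s := by field_simp
    _ < u (I s) * (I s)⁻¹ := h1
  have hroot := hΘroot ω ⟨hω1, hω2⟩
  rw [← hs_def] at hroot
  have hθs : Θ ω * s = Φ / ω := by
    rw [hs_def]; field_simp
  -- Part 1 : Θ ω > F / u Q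
  have part1 : Θ ω > F / u Q := by
    rw [gt_iff_lt, div_lt_iff₀ huQ]
    nlinarith [hroot, hθs, mul_pos hθpos (sub_pos.mpr htang)]
  refine ⟨part1, ?_⟩
  -- Part 2 : the derivative formula
  have hΘd := (hΘdiff ω ⟨hω1, hω2⟩).hasDerivAt
  have hne : ω * Θ ω ≠ 0 := by positivity
  have hmul : HasDerivAt (fun ω' => ω' * Θ ω') (1 * Θ ω + ω * deriv Θ ω) ω :=
    (hasDerivAt_id ω).mul hΘd
  have hg : HasDerivAt (fun ω' => Φ / (ω' * Θ ω'))
      ((0 * (ω * Θ ω) - Φ * (1 * Θ ω + ω * deriv Θ ω)) / (ω * Θ ω) ^ 2) ω :=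
    (hasDerivAt_const ω Φ).div hmul hne
  set s' : ℝ := (0 * (ω * Θ ω) - Φ * (1 * Θ ω + ω * deriv Θ ω)) / (ω * Θ ω) ^ 2 with hs'_def
  have hId := (hIdiff s ⟨hspos, hslt⟩).hasDerivAt
  set I' : ℝ := deriv I s with hI'_def
  have hIcomp : HasDerivAt (fun ω' => I (Φ / (ω' * Θ ω'))) (I' * s') ω := by
    have := hId.comp ω hg
    simpa [hs_def, Function.comp_def] using this
  have hud : HasDerivAt u s (I s) := by
    have := (hdiff _ hIsmem).hasDerivAt
    rwa [hIs_deriv] at this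
  have hucomp : HasDerivAt (fun ω' => u (I (Φ / (ω' * Θ ω')))) (s * (I' * s')) ω := by
    have := hud.comp ω hIcomp
    simpa [hs_def, Function.comp_def] using this
  have hinv : HasDerivAt (fun ω' => Φ / ω') ((0 * ω - Φ * 1) / ω ^ 2) ω :=
    (hasDerivAt_const ω Φ).div (hasDerivAt_id ω) (ne_of_gt hω0)
  have hf : HasDerivAt
      (fun ω' => Θ ω' * u (I (Φ / (ω' * Θ ω'))) - (Φ / ω') * I (Φ / (ω' * Θ ω')) - Θ ω' * u Q + F)
      ((deriv Θ ω * u (I s) + Θ ω * (s * (I' * s')))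
        - ((0 * ω - Φ * 1) / ω ^ 2 * I s + (Φ / ω) * (I' * s'))
        - (deriv Θ ω * u Q + Θ ω * 0) + 0) ω := by
    have h1 : HasDerivAt (fun ω' => Θ ω' * u (I (Φ / (ω' * Θ ω'))))
        (deriv Θ ω * u (I s) + Θ ω * (s * (I' * s'))) ω := by
      have := hΘd.mul hucomp
      exact this
    have h2 : HasDerivAt (fun ω' => (Φ / ω') * I (Φ / (ω' * Θ ω')))
        ((0 * ω - Φ * 1) / ω ^ 2 * I s + (Φ / ω) * (I' * s')) ω := by
      have := hinv.mul hIcomp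
      exact this
    have h3 : HasDerivAt (fun ω' => Θ ω' * u Q) (deriv Θ ω * u Q + Θ ω * 0) ω :=
      hΘd.mul (hasDerivAt_const ω (u Q))
    exact ((h1.sub h2).sub h3).add (hasDerivAt_const ω F)
  -- the function is identically 0 near ω, so the derivative is 0
  have heq : (fun ω' => Θ ω' * u (I (Φ / (ω' * Θ ω'))) - (Φ / ω') * I (Φ / (ω' * Θ ω'))
      - Θ ω' * u Q + F) =ᶠ[nhds ω] (fun _ => (0:ℝ)) := by
    filter_upwards [isOpen_Ioo.mem_nhds (Set.mem_Ioo.mpr ⟨hω1, hω2⟩)] with ω' hω'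
    exact hΘroot ω' hω'
  have hzero : HasDerivAt (fun _ : ℝ => (0:ℝ))
      ((deriv Θ ω * u (I s) + Θ ω * (s * (I' * s')))
        - ((0 * ω - Φ * 1) / ω ^ 2 * I s + (Φ / ω) * (I' * s'))
        - (deriv Θ ω * u Q + Θ ω * 0) + 0) ω :=
    heq.hasDerivAt_iff.mp hf
  have hD : (deriv Θ ω * u (I s) + Θ ω * (s * (I' * s')))
        - ((0 * ω - Φ * 1) / ω ^ 2 * I s + (Φ / ω) * (I' * s'))
        - (deriv Θ ω * u Q + Θ ω * 0) + 0 = 0 :=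
    hzero.unique (hasDerivAt_const ω 0)
  have hden : 0 < u Q - u (I s) := sub_pos.mpr huIs_lt
  have key : deriv Θ ω = (Φ / ω ^ 2) * I s / (u Q - u (I s)) := by
    rw [eq_div_iff (ne_of_gt hden)]
    linear_combination (I' * s') * hθs - hD
  refine ⟨key, ?_⟩
  rw [key]
  have : 0 < (Φ / ω ^ 2) * I s := by positivity
  exact div_pos this hden
end
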